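/- Let A be a finite-dimensional solvable Leibniz algebra over an infinite field and K a primitive ideal of A. Then K is a generalized Frattini ideal of A if and only if K is properly contained in Nil(A). -/
import Mathlib


namespace Leib

variable (F : Type*) [Field F] {A : Type*} [NonUnitalNonAssocRing A]
  [Module F A] [SMulCommClass F A A] [IsScalarTower F A A]

/-- `S` is a subalgebra: a submodule closed under multiplication. -/
def IsSubalg (S : Submodule F A) : Prop := ∀ x ∈ S, ∀ y ∈ S, x * y ∈ S

/-- `S` is a (two-sided) ideal of the Leibniz algebra `A`. -/
def IsIdeal (S : Submodule F A) : Prop := ∀ a : A, ∀ s ∈ S, a * s ∈ S ∧ s * a ∈ S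

/-- The normalizer `N_A(C)` of a subspace `C` in `A`. -/
def normalizer (C : Submodule F A) : Submodule F A where
  carrier := {a | ∀ c ∈ C, a * c ∈ C ∧ c * a ∈ C}
  zero_mem' := by intro c hc; simp [C.zero_mem]
  add_mem' := by
    intro a b ha hb c hc
    exact ⟨by rw [add_mul]; exact C.add_mem (ha c hc).1 (hb c hc).1,
           by rw [mul_add]; exact C.add_mem (ha c hc).2 (hb c hc).2⟩
  smul_mem' := by
    intro r a ha c hc
    exact ⟨by rw [smul_mul_assoc]; exact C.smul_mem r (ha c hc).1,
           by rw [mul_smul_comm]; exact C.smul_mem r (ha c hc).2⟩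

/-- The span of all products `s * t` with `s ∈ S`, `t ∈ T`. -/
def mulSpan (S T : Submodule F A) : Submodule F A :=
  Submodule.span F {x | ∃ s ∈ S, ∃ t ∈ T, x = s * t}

/-- The (left-normed) lower central series of a subspace `S`:
`S, S·S, S·(S·S), …`. -/
def lcs (S : Submodule F A) : ℕ → Submodule F A
  | 0 => S
  | n + 1 => mulSpan F S (lcs S n)

/-- `S` is nilpotent. -/
def IsNilp (S : Submodule F A) : Prop := ∃ n, lcs F S n = ⊥

/-- The derived series of a subspace `S`. -/
def derSeries (S : Submodule F A) : ℕ → Submodule F A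
  | 0 => S
  | n + 1 => mulSpan F (derSeries S n) (derSeries S n)

/-- `S` is solvable. -/
def IsSolv (S : Submodule F A) : Prop := ∃ n, derSeries F S n = ⊥

/-- `C` is a Cartan subalgebra of the subalgebra `K`: a nilpotent subalgebra of `K`
that is self-normalizing in `K`. -/
def IsCartanOf (K C : Submodule F A) : Prop :=
  C ≤ K ∧ IsSubalg F C ∧ IsNilp F C ∧ normalizer F C ⊓ K = C

/-- `H` is a generalized Frattini ideal (Cartan-subalgebra definition): `H` is proper and
whenever `A = H + N_A(C)` for `C` a Cartan subalgebra of an ideal `K` of `A`,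
it follows that `A = N_A(C)`. -/
def GenFrattiniC (H : Submodule F A) : Prop :=
  H ≠ ⊤ ∧ ∀ K C : Submodule F A, IsIdeal F K → IsCartanOf F K C →
    H ⊔ normalizer F C = ⊤ → normalizer F C = ⊤

/-- `H` is a generalized Frattini ideal (nilpotency characterization): `H` is proper and
every ideal `J ⊇ H` with `J/H` nilpotent is nilpotent. -/
def GenFrattiniN (H : Submodule F A) : Prop :=
  H ≠ ⊤ ∧ ∀ J : Submodule F A, IsIdeal F J → H ≤ J →
    (∃ n, lcs F J n ≤ H) → IsNilp F J

/-- The center `Z(A)`. -/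
def center : Submodule F A where
  carrier := {z | ∀ a : A, z * a = 0 ∧ a * z = 0}
  zero_mem' := by intro a; simp
  add_mem' := by
    intro x y hx hy a
    exact ⟨by rw [add_mul, (hx a).1, (hy a).1, add_zero],
           by rw [mul_add, (hx a).2, (hy a).2, add_zero]⟩
  smul_mem' := by
    intro r x hx a
    exact ⟨by rw [smul_mul_assoc, (hx a).1, smul_zero],
           by rw [mul_smul_comm, (hx a).2, smul_zero]⟩

/-- `M` is a maximal subalgebra of `A`. -/
def IsMaxSubalg (M : Submodule F A) : Prop :=
  IsSubalg F M ∧ M ≠ ⊤ ∧ ∀ S : Submodule F A, IsSubalg F S → M < S → S = ⊤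

/-- `I` is a maximal ideal of `A`. -/
def IsMaxIdeal (I : Submodule F A) : Prop :=
  IsIdeal F I ∧ I ≠ ⊤ ∧ ∀ J : Submodule F A, IsIdeal F J → I < J → J = ⊤

/-- `K` is a primitive ideal: `Φ(A/K) = 0`, `A/K` has a unique minimal ideal, and
`dim (A/K) > 1`.  (Ideals and maximal subalgebras of `A/K` are stated via the
correspondence with ideals and maximal subalgebras of `A` containing `K`.) -/
def IsPrimitiveIdeal (K : Submodule F A) : Prop :=
  IsIdeal F K ∧
  (∀ J : Submodule F A, IsIdeal F J → K ≤ J →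
      (∀ M : Submodule F A, IsMaxSubalg F M → K ≤ M → J ≤ M) → J = K) ∧
  (∃! B : Submodule F A, IsIdeal F B ∧ K < B ∧
      ∀ B' : Submodule F A, IsIdeal F B' → K < B' → ¬ B' < B) ∧
  1 < Module.finrank F (A ⧸ K)

end Leib

namespace Leib

variable {F : Type*} [Field F] {A : Type*} [NonUnitalNonAssocRing A]
  [Module F A] [SMulCommClass F A A] [IsScalarTower F A A]

theorem mul_mem_mulSpan {S T : Submodule F A} {s t : A} (hs : s ∈ S) (ht : t ∈ T) :
    s * t ∈ mulSpan F S T :=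
  Submodule.subset_span ⟨s, hs, t, ht, rfl⟩

theorem mulSpan_le {S T Q : Submodule F A} :
    mulSpan F S T ≤ Q ↔ ∀ s ∈ S, ∀ t ∈ T, s * t ∈ Q := by
  constructor
  · intro h s hs t ht; exact h (mul_mem_mulSpan hs ht)
  · intro h
    rw [mulSpan, Submodule.span_le]
    rintro x ⟨s, hs, t, ht, rfl⟩
    exact h s hs t ht

theorem mulSpan_mono {S S' T T' : Submodule F A} (h1 : S ≤ S') (h2 : T ≤ T') :
    mulSpan F S T ≤ mulSpan F S' T' :=
  mulSpan_le.mpr fun s hs t ht => mul_mem_mulSpan (h1 hs) (h2 ht)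

theorem mulSpan_le_left {S : Submodule F A} (hS : IsIdeal F S) (T : Submodule F A) :
    mulSpan F S T ≤ S :=
  mulSpan_le.mpr fun s hs t _ => (hS t s hs).2

theorem mulSpan_le_right (S : Submodule F A) {T : Submodule F A} (hT : IsIdeal F T) :
    mulSpan F S T ≤ T :=
  mulSpan_le.mpr fun s _ t ht => (hT s t ht).1

theorem mulSpan_sup_right {S T T' : Submodule F A} :
    mulSpan F S (T ⊔ T') ≤ mulSpan F S T ⊔ mulSpan F S T' := by
  refine mulSpan_le.mpr fun s hs t ht => ?_
  obtain ⟨y, hy, z, hz, rfl⟩ := Submodule.mem_sup.mp ht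
  rw [mul_add]
  exact Submodule.add_mem_sup (mul_mem_mulSpan hs hy) (mul_mem_mulSpan hs hz)

theorem mulSpan_sup_left {S S' T : Submodule F A} :
    mulSpan F (S ⊔ S') T ≤ mulSpan F S T ⊔ mulSpan F S' T := by
  refine mulSpan_le.mpr fun s hs t ht => ?_
  obtain ⟨y, hy, z, hz, rfl⟩ := Submodule.mem_sup.mp hs
  rw [add_mul]
  exact Submodule.add_mem_sup (mul_mem_mulSpan hy ht) (mul_mem_mulSpan hz ht)

theorem mulSpan_induction {S T Q : Submodule F A} (a : A)
    (h : ∀ s ∈ S, ∀ t ∈ T, a * (s * t) ∈ Q ∧ (s * t) * a ∈ Q) :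
    ∀ x ∈ mulSpan F S T, a * x ∈ Q ∧ x * a ∈ Q := by
  intro x hx
  induction hx using Submodule.span_induction with
  | mem x hxx => obtain ⟨s, hs, t, ht, rfl⟩ := hxx; exact h s hs t ht
  | zero => simp
  | add x y _ _ hx hy =>
      exact ⟨by rw [mul_add]; exact Q.add_mem hx.1 hy.1,
             by rw [add_mul]; exact Q.add_mem hx.2 hy.2⟩
  | smul r x _ hx =>
      exact ⟨by rw [mul_smul_comm]; exact Q.smul_mem r hx.1,
             by rw [smul_mul_assoc]; exact Q.smul_mem r hx.2⟩

theorem mulSpan_induction_right {S T Q : Submodule F A} (u : A)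
    (h : ∀ s ∈ S, ∀ t ∈ T, (s * t) * u ∈ Q) :
    ∀ x ∈ mulSpan F S T, x * u ∈ Q := by
  intro x hx
  induction hx using Submodule.span_induction with
  | mem x hxx => obtain ⟨s, hs, t, ht, rfl⟩ := hxx; exact h s hs t ht
  | zero => simp
  | add x y _ _ hx hy => rw [add_mul]; exact Q.add_mem hx hy
  | smul r x _ hx => rw [smul_mul_assoc]; exact Q.smul_mem r hx

theorem ideal_sup {S T : Submodule F A} (hS : IsIdeal F S) (hT : IsIdeal F T) :
    IsIdeal F (S ⊔ T) := by
  intro a x hx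
  obtain ⟨s, hs, t, ht, rfl⟩ := Submodule.mem_sup.mp hx
  constructor
  · rw [mul_add]; exact Submodule.add_mem_sup (hS a s hs).1 (hT a t ht).1
  · rw [add_mul]; exact Submodule.add_mem_sup (hS a s hs).2 (hT a t ht).2

end Leib

namespace Leib

set_option linter.unusedSectionVars false
set_option linter.unusedVariables false

variable {F : Type*} [Field F] {A : Type*} [NonUnitalNonAssocRing A]
  [Module F A] [SMulCommClass F A A] [IsScalarTower F A A]

theorem prodSup_ideal (leib : ∀ a b c : A, a * (b * c) = a * b * c + b * (a * c))
    {S T : Submodule F A} (hS : IsIdeal F S) (hT : IsIdeal F T) :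
    IsIdeal F (mulSpan F S T ⊔ mulSpan F T S) := by
  intro a x hx
  obtain ⟨u, hu, v, hv, rfl⟩ := Submodule.mem_sup.mp hx
  set Q := mulSpan F S T ⊔ mulSpan F T S with hQ
  have hu' : a * u ∈ Q ∧ u * a ∈ Q := by
    refine mulSpan_induction a (fun s hs t ht => ⟨?_, ?_⟩) u hu
    · rw [leib a s t]
      exact Q.add_mem (le_sup_left (α := Submodule F A)
        (mul_mem_mulSpan (hS a s hs).1 ht))
        (le_sup_left (α := Submodule F A) (mul_mem_mulSpan hs (hT a t ht).1))
    · have h : (s * t) * a = s * (t * a) - t * (s * a) :=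
        eq_sub_of_add_eq (leib s t a).symm
      rw [h]
      exact Q.sub_mem (le_sup_left (α := Submodule F A)
        (mul_mem_mulSpan hs (hT a t ht).2))
        (le_sup_right (α := Submodule F A) (mul_mem_mulSpan ht (hS a s hs).2))
  have hv' : a * v ∈ Q ∧ v * a ∈ Q := by
    refine mulSpan_induction a (fun t ht s hs => ⟨?_, ?_⟩) v hv
    · rw [leib a t s]
      exact Q.add_mem (le_sup_right (α := Submodule F A)
        (mul_mem_mulSpan (hT a t ht).1 hs))
        (le_sup_right (α := Submodule F A) (mul_mem_mulSpan ht (hS a s hs).1))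
    · have h : (t * s) * a = t * (s * a) - s * (t * a) :=
        eq_sub_of_add_eq (leib t s a).symm
      rw [h]
      exact Q.sub_mem (le_sup_right (α := Submodule F A)
        (mul_mem_mulSpan ht (hS a s hs).2))
        (le_sup_left (α := Submodule F A) (mul_mem_mulSpan hs (hT a t ht).2))
  constructor
  · rw [mul_add]; exact Q.add_mem hu'.1 hv'.1
  · rw [add_mul]; exact Q.add_mem hu'.2 hv'.2

theorem sq_ideal (leib : ∀ a b c : A, a * (b * c) = a * b * c + b * (a * c))
    {S : Submodule F A} (hS : IsIdeal F S) : IsIdeal F (mulSpan F S S) := by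
  have := prodSup_ideal leib hS hS
  rwa [sup_idem] at this

theorem lcs_mono {S T : Submodule F A} (h : S ≤ T) :
    ∀ n, lcs F S n ≤ lcs F T n := by
  intro n
  induction n with
  | zero => exact h
  | succ n ih => exact mulSpan_mono h ih

theorem derSeries_mono {S T : Submodule F A} (h : S ≤ T) :
    ∀ n, derSeries F S n ≤ derSeries F T n := by
  intro n
  induction n with
  | zero => exact h
  | succ n ih => exact mulSpan_mono ih ih

theorem mulSpan_sup_ideal_le {S T K : Submodule F A} (hK : IsIdeal F K) :
    mulSpan F (S ⊔ K) (T ⊔ K) ≤ mulSpan F S T ⊔ K := by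
  refine mulSpan_le.mpr fun s hs t ht => ?_
  obtain ⟨x, hx, k, hk, rfl⟩ := Submodule.mem_sup.mp hs
  obtain ⟨y, hy, k', hk', rfl⟩ := Submodule.mem_sup.mp ht
  have h : (x + k) * (y + k') = x * y + (x * k' + k * (y + k')) := by
    rw [add_mul, mul_add]; abel
  rw [h]
  exact Submodule.add_mem_sup (mul_mem_mulSpan hx hy)
    (K.add_mem (hK x k' hk').1 (hK (y + k') k hk).2)

theorem lcs_mul (leib : ∀ a b c : A, a * (b * c) = a * b * c + b * (a * c))
    {J : Submodule F A} :
    ∀ p q, mulSpan F (lcs F J p) (lcs F J q) ≤ lcs F J (p + q + 1) := by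
  intro p
  induction p with
  | zero => intro q; rw [Nat.zero_add]; exact le_rfl
  | succ p ih =>
      intro q
      refine mulSpan_le.mpr fun x hx t ht => ?_
      have key : ∀ j ∈ J, ∀ w ∈ lcs F J p, (j * w) * t ∈ lcs F J (p + 1 + q + 1) := by
        intro j hj w hw
        have h : (j * w) * t = j * (w * t) - w * (j * t) :=
          eq_sub_of_add_eq (leib j w t).symm
        rw [h]
        have h1 : j * (w * t) ∈ lcs F J (p + 1 + q + 1) := by
          have hwt : w * t ∈ lcs F J (p + q + 1) := ih q (mul_mem_mulSpan hw ht)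
          have : j * (w * t) ∈ lcs F J (p + q + 1 + 1) := mul_mem_mulSpan hj hwt
          have he : p + q + 1 + 1 = p + 1 + q + 1 := by omega
          rwa [he] at this
        have h2 : w * (j * t) ∈ lcs F J (p + 1 + q + 1) := by
          have hjt : j * t ∈ lcs F J (q + 1) := mul_mem_mulSpan hj ht
          have : w * (j * t) ∈ lcs F J (p + (q + 1) + 1) :=
            ih (q + 1) (mul_mem_mulSpan hw hjt)
          have he : p + (q + 1) + 1 = p + 1 + q + 1 := by omega
          rwa [he] at this
        exact Submodule.sub_mem _ h1 h2
      exact mulSpan_induction_right t key x hx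

theorem subalg_sup (leib : ∀ a b c : A, a * (b * c) = a * b * c + b * (a * c))
    {B M : Submodule F A} (hB : IsIdeal F B) (hM : IsSubalg F M) :
    IsSubalg F (B ⊔ M) := by
  intro x hx y hy
  obtain ⟨b, hb, m, hm, rfl⟩ := Submodule.mem_sup.mp hx
  obtain ⟨b', hb', m', hm', rfl⟩ := Submodule.mem_sup.mp hy
  have h : (b + m) * (b' + m') = (b * (b' + m') + m * b') + m * m' := by
    rw [add_mul, mul_add m, ← add_assoc]
  rw [h]
  exact Submodule.add_mem_sup
    (B.add_mem (hB (b' + m') b hb).2 (hB m b' hb').1)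
    (hM m hm m' hm')

/-- The centralizer of `B` modulo `K`. -/
def centMod (K B : Submodule F A) : Submodule F A where
  carrier := {x | ∀ b ∈ B, x * b ∈ K ∧ b * x ∈ K}
  zero_mem' := by intro b hb; simp [K.zero_mem]
  add_mem' := by
    intro x y hx hy b hb
    exact ⟨by rw [add_mul]; exact K.add_mem (hx b hb).1 (hy b hb).1,
           by rw [mul_add]; exact K.add_mem (hx b hb).2 (hy b hb).2⟩
  smul_mem' := by
    intro r x hx b hb
    exact ⟨by rw [smul_mul_assoc]; exact K.smul_mem r (hx b hb).1,
           by rw [mul_smul_comm]; exact K.smul_mem r (hx b hb).2⟩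

theorem mem_centMod {K B : Submodule F A} {x : A} :
    x ∈ centMod K B ↔ ∀ b ∈ B, x * b ∈ K ∧ b * x ∈ K := Iff.rfl

theorem centMod_ideal (leib : ∀ a b c : A, a * (b * c) = a * b * c + b * (a * c))
    {K B : Submodule F A} (hK : IsIdeal F K) (hB : IsIdeal F B) :
    IsIdeal F (centMod K B) := by
  intro a x hx
  constructor
  · intro b hb
    constructor
    · have h : (a * x) * b = a * (x * b) - x * (a * b) :=
        eq_sub_of_add_eq (leib a x b).symm
      rw [h]
      exact K.sub_mem (hK a _ (hx b hb).1).1 (hx (a * b) (hB a b hb).1).1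
    · rw [leib b a x]
      exact K.add_mem (hx (b * a) (hB a b hb).2).2 (hK a _ (hx b hb).2).1
  · intro b hb
    constructor
    · have h : (x * a) * b = x * (a * b) - a * (x * b) :=
        eq_sub_of_add_eq (leib x a b).symm
      rw [h]
      exact K.sub_mem (hx (a * b) (hB a b hb).1).1 (hK a _ (hx b hb).1).1
    · rw [leib b x a]
      exact K.add_mem (hK a _ (hx b hb).2).2 (hx (b * a) (hB a b hb).2).1

end Leib

namespace Leib

set_option linter.unusedSectionVars false
set_option linter.unusedVariables false

variable {F : Type*} [Field F] {A : Type*} [NonUnitalNonAssocRing A]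
  [Module F A] [SMulCommClass F A A] [IsScalarTower F A A]

/-- Every ideal strictly containing `K` contains the unique minimal ideal `B` over `K`. -/
theorem min_ideal_le [Module.Finite F A] {K B : Submodule F A}
    (huniq : ∀ y : Submodule F A,
      (IsIdeal F y ∧ K < y ∧ ∀ B' : Submodule F A, IsIdeal F B' → K < B' → ¬ B' < y) → y = B) :
    ∀ J : Submodule F A, IsIdeal F J → K < J → B ≤ J := by
  have H : ∀ r : ℕ, ∀ J : Submodule F A, IsIdeal F J → K < J →
      Module.finrank F J ≤ r → B ≤ J := by
    intro r
    induction r with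
    | zero =>
        intro J hJ hKJ hr
        have h1 : Module.finrank F K < Module.finrank F J :=
          Submodule.finrank_lt_finrank_of_lt hKJ
        omega
    | succ r ih =>
        intro J hJ hKJ hr
        by_cases hmin : ∀ B' : Submodule F A, IsIdeal F B' → K < B' → ¬ B' < J
        · exact (huniq J ⟨hJ, hKJ, hmin⟩) ▸ le_rfl
        · push_neg at hmin
          obtain ⟨B', hB'id, hKB', hB'J⟩ := hmin
          have h1 : Module.finrank F B' < Module.finrank F J :=
            Submodule.finrank_lt_finrank_of_lt hB'J
          exact (ih B' hB'id hKB' (by omega)).trans hB'J.le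
  intro J hJ hKJ
  exact H (Module.finrank F J) J hJ hKJ le_rfl

/-- The unique minimal ideal over `K` is abelian modulo `K`. -/
theorem sq_min_le (leib : ∀ a b c : A, a * (b * c) = a * b * c + b * (a * c))
    (hAsolv : IsSolv F (⊤ : Submodule F A))
    {K B : Submodule F A} (hKid : IsIdeal F K) (hBid : IsIdeal F B) (hKB : K < B)
    (hBmin : ∀ B' : Submodule F A, IsIdeal F B' → K < B' → ¬ B' < B) :
    mulSpan F B B ≤ K := by
  set D := mulSpan F B B ⊔ K with hD
  have hDid : IsIdeal F D := ideal_sup (sq_ideal leib hBid) hKid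
  have hDB : D ≤ B := sup_le (mulSpan_le_left hBid B) hKB.le
  by_cases hKD : K < D
  · exfalso
    have hDeq : D = B := (lt_or_eq_of_le hDB).resolve_left (hBmin D hDid hKD)
    have hstep : ∀ n, B ≤ derSeries F B n ⊔ K := by
      intro n
      induction n with
      | zero => exact le_sup_left
      | succ n ih =>
          calc B = D := hDeq.symm
            _ = mulSpan F B B ⊔ K := hD
            _ ≤ mulSpan F (derSeries F B n ⊔ K) (derSeries F B n ⊔ K) ⊔ K :=
                sup_le_sup_right (mulSpan_mono ih ih) K
            _ ≤ (mulSpan F (derSeries F B n) (derSeries F B n) ⊔ K) ⊔ K :=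
                sup_le_sup_right (mulSpan_sup_ideal_le hKid) K
            _ = derSeries F B (n + 1) ⊔ K := by rw [sup_assoc, sup_idem]; rfl
    obtain ⟨n, hn⟩ := hAsolv
    have h1 : derSeries F B n ≤ (⊥ : Submodule F A) :=
      hn ▸ derSeries_mono le_top n
    have h2 : B ≤ K := by
      have := (hstep n).trans (sup_le_sup_right h1 K)
      rwa [bot_sup_eq] at this
    exact hKB.not_ge h2
  · have : D = K := eq_of_le_of_not_lt le_sup_right hKD |>.symm
    exact le_sup_left.trans this.le

end Leib

namespace Leib

set_option linter.unusedSectionVars false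
set_option linter.unusedVariables false

variable {F : Type*} [Field F] {A : Type*} [NonUnitalNonAssocRing A]
  [Module F A] [SMulCommClass F A A] [IsScalarTower F A A]

/-- Main structural lemma: for a primitive ideal `K` with unique minimal
over-ideal `B`, every ideal `J ⊇ K` that is nilpotent modulo `K` satisfies `J ≤ B`. -/
theorem ideal_le_min [Module.Finite F A]
    (leib : ∀ a b c : A, a * (b * c) = a * b * c + b * (a * c))
    (hAsolv : IsSolv F (⊤ : Submodule F A))
    {K B : Submodule F A} (hKid : IsIdeal F K) (hBid : IsIdeal F B) (hKB : K < B)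
    (hBmin : ∀ B' : Submodule F A, IsIdeal F B' → K < B' → ¬ B' < B)
    (huniq : ∀ y : Submodule F A,
      (IsIdeal F y ∧ K < y ∧ ∀ B' : Submodule F A, IsIdeal F B' → K < B' → ¬ B' < y) → y = B)
    (hphi : ∀ J : Submodule F A, IsIdeal F J → K ≤ J →
      (∀ M : Submodule F A, IsMaxSubalg F M → K ≤ M → J ≤ M) → J = K)
    {J : Submodule F A} (hJid : IsIdeal F J) (hKJ : K < J)
    {n : ℕ} (hJn : lcs F J n ≤ K) : J ≤ B := by
  have hB2 : mulSpan F B B ≤ K := sq_min_le leib hAsolv hKid hBid hKB hBmin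
  have hBle : ∀ J' : Submodule F A, IsIdeal F J' → K < J' → B ≤ J' := min_ideal_le huniq
  -- a maximal subalgebra avoiding B
  obtain ⟨M, hMmax, hKM, hBM⟩ :
      ∃ M : Submodule F A, IsMaxSubalg F M ∧ K ≤ M ∧ ¬ B ≤ M := by
    by_contra h
    push_neg at h
    exact hKB.ne' (hphi B hBid hKB.le (fun M hM hKM => h M hM hKM))
  have hBMtop : B ⊔ M = ⊤ := by
    refine hMmax.2.2 _ (subalg_sup leib hBid hMmax.1) ?_
    exact lt_of_le_of_ne le_sup_right (fun h => hBM (h ▸ le_sup_left))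
  -- W := J·B + B·J ≤ K
  set W := mulSpan F J B ⊔ mulSpan F B J with hWdef
  have hWK : W ≤ K := by
    by_contra hc
    have hWid : IsIdeal F (W ⊔ K) := ideal_sup (prodSup_ideal leib hJid hBid) hKid
    have hWB : W ⊔ K ≤ B :=
      sup_le (sup_le (mulSpan_le_right J hBid) (mulSpan_le_left hBid J)) hKB.le
    have hKlt : K < W ⊔ K :=
      lt_of_le_of_ne le_sup_right (fun h => hc (le_sup_left.trans h.symm.le))
    have hWeq : W ⊔ K = B := (lt_or_eq_of_le hWB).resolve_left (hBmin _ hWid hKlt)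
    have hBJ : B ≤ J := hBle J hJid hKJ
    have hdesc : ∀ k, B ≤ lcs F J k ⊔ K := by
      intro k
      induction k with
      | zero => exact hBJ.trans le_sup_left
      | succ k ih =>
          have h1 : mulSpan F J B ≤ lcs F J (k + 1) ⊔ K := by
            refine (mulSpan_mono le_rfl ih).trans (mulSpan_sup_right.trans ?_)
            exact sup_le le_sup_left ((mulSpan_le_right J hKid).trans le_sup_right)
          have h2 : mulSpan F B J ≤ lcs F J (k + 1) ⊔ K := by
            refine (mulSpan_mono ih le_rfl).trans (mulSpan_sup_left.trans ?_)
            refine sup_le ?_ ((mulSpan_le_left hKid J).trans le_sup_right)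
            have := lcs_mul leib (J := J) k 0
            have he : k + 0 + 1 = k + 1 := by omega
            rw [he] at this
            exact this.trans le_sup_left
          calc B = W ⊔ K := hWeq.symm
            _ ≤ (lcs F J (k + 1) ⊔ K) ⊔ K := sup_le (sup_le (h1.trans le_sup_left) (h2.trans le_sup_left)) le_sup_right
            _ = lcs F J (k + 1) ⊔ K := by rw [sup_assoc, sup_idem]
    exact hKB.not_ge ((hdesc n).trans (sup_le hJn le_rfl))
  -- J centralizes B modulo K
  have hJC : J ≤ centMod K B := by
    intro x hx
    intro b hb
    exact ⟨hWK (le_sup_left (α := Submodule F A) (mul_mem_mulSpan hx hb)),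
           hWK (le_sup_right (α := Submodule F A) (mul_mem_mulSpan hb hx))⟩
  have hBC : B ≤ centMod K B := fun x hx b hb =>
    ⟨hB2 (mul_mem_mulSpan hx hb), hB2 (mul_mem_mulSpan hb hx)⟩
  have hCid : IsIdeal F (centMod K B) := centMod_ideal leib hKid hBid
  -- (centMod ⊓ M) ⊔ K is an ideal
  have hIid : IsIdeal F ((centMod K B ⊓ M) ⊔ K) := by
    intro a y hy
    obtain ⟨u, hu, k, hk, rfl⟩ := Submodule.mem_sup.mp hy
    have ha : a ∈ B ⊔ M := by rw [hBMtop]; trivial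
    obtain ⟨b, hb, m, hm, rfl⟩ := Submodule.mem_sup.mp ha
    constructor
    · have h : (b + m) * (u + k) = m * u + (b * u + (b + m) * k) := by
        rw [mul_add, add_mul]; abel
      rw [h]
      refine Submodule.add_mem_sup ⟨(hCid m u hu.1).1, hMmax.1 m hm u hu.2⟩ ?_
      exact K.add_mem (hu.1 b hb).2 (hKid (b + m) k hk).1
    · have h : (u + k) * (b + m) = u * m + (u * b + k * (b + m)) := by
        rw [add_mul, mul_add]; abel
      rw [h]
      refine Submodule.add_mem_sup ⟨(hCid m u hu.1).2, hMmax.1 u hu.2 m hm⟩ ?_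
      exact K.add_mem (hu.1 b hb).1 (hKid (b + m) k hk).2
  have hIK : centMod K B ⊓ M ≤ K := by
    by_contra hc
    have hKlt : K < (centMod K B ⊓ M) ⊔ K :=
      lt_of_le_of_ne le_sup_right (fun h => hc (le_sup_left.trans h.symm.le))
    have hBI : B ≤ (centMod K B ⊓ M) ⊔ K := hBle _ hIid hKlt
    exact hBM (hBI.trans (sup_le inf_le_right hKM))
  have hCB : centMod K B ≤ B := by
    have hmod : (B ⊔ M) ⊓ centMod K B = B ⊔ (M ⊓ centMod K B) :=
      sup_inf_assoc_of_le M hBC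
    rw [hBMtop, top_inf_eq] at hmod
    rw [hmod]
    exact sup_le le_rfl (((inf_comm M (centMod K B)).le.trans hIK).trans hKB.le)
  exact hJC.trans hCB

end Leib

open Leib in
/-- for a solvable `A` and a primitive ideal `K`, `K` is generalized
Frattini iff `K` is properly contained in `Nil(A)`. -/
theorem primitive_genFrattini_iff_lt_nil
    {F : Type*} [Field F] [Infinite F] {A : Type*} [NonUnitalNonAssocRing A]
    [Module F A] [SMulCommClass F A A] [IsScalarTower F A A] [Module.Finite F A]
    (leib : ∀ a b c : A, a * (b * c) = a * b * c + b * (a * c))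
    (hAsolv : IsSolv F (⊤ : Submodule F A))
    (N : Submodule F A) (hN : IsIdeal F N) (hNnilp : IsNilp F N)
    (hNmax : ∀ M : Submodule F A, IsIdeal F M → IsNilp F M → M ≤ N)
    (K : Submodule F A) (hK : IsPrimitiveIdeal F K) :
    GenFrattiniN F K ↔ K < N := by
  obtain ⟨hKid, hphi, ⟨B, ⟨hBid, hKB, hBmin⟩, huniq⟩, _⟩ := hK
  constructor
  · rintro ⟨hKtop, hGF⟩
    have hB2 : mulSpan F B B ≤ K := sq_min_le leib hAsolv hKid hBid hKB hBmin
    have hBnilp : IsNilp F B := hGF B hBid hKB.le ⟨1, hB2⟩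
    exact lt_of_lt_of_le hKB (hNmax B hBid hBnilp)
  · intro hKN
    constructor
    · intro h
      rw [h] at hKN
      exact hKN.not_ge le_top
    · rintro J hJid hKJ ⟨n, hJn⟩
      have hBleN : B ≤ N := min_ideal_le huniq N hN hKN
      rcases eq_or_lt_of_le hKJ with rfl | hKJ'
      · obtain ⟨m, hm⟩ := hNnilp
        exact ⟨m, le_bot_iff.mp (hm ▸ lcs_mono hKN.le m)⟩
      · have hJB : J ≤ B :=
          ideal_le_min leib hAsolv hKid hBid hKB hBmin huniq hphi hJid hKJ' hJn
        obtain ⟨m, hm⟩ := hNnilp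
        exact ⟨m, le_bot_iff.mp (hm ▸ lcs_mono (hJB.trans hBleN) m)⟩
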